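/- Let θ₁ < θ₂ < θ₃ < θ₄ be real numbers with θ₄ − θ₁ < 2π, and set η = (sin((θ₂−θ₁)/2)·sin((θ₄−θ₃)/2)) / (sin((θ₃−θ₁)/2)·sin((θ₄−θ₂)/2)). Then for every θ ∈ ℝ, β^{[θ₁,θ₃]}(θ) + β^{[θ₂,θ₄]}(θ) − η·(β^{[θ₁,θ₂]}(θ) + β^{[θ₃,θ₄]}(θ)) − (1−η)·(β^{[θ₂,θ₃]}(θ) + β^{[θ₁,θ₄]}(θ)) = 0. -/
import Mathlib


open Real

/-- Coolness function on the circle: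
`β^{[p,q]}(θ) = 2 sin((θ-p)/2) sin((q-θ)/2) / sin((q-p)/2)` on `[p,q]`, `0` outside. -/
noncomputable def betaCirc (p q θ : ℝ) : ℝ :=
  if θ ∈ Set.Icc p q then
    2 * Real.sin ((θ - p) / 2) * Real.sin ((q - θ) / 2) / Real.sin ((q - p) / 2)
  else 0

lemma betaCirc_zero_left {p q θ : ℝ} (h : θ ≤ p) : betaCirc p q θ = 0 := by
  unfold betaCirc
  split_ifs with hm
  · have : θ = p := le_antisymm h hm.1
    simp [this]
  · rfl

lemma betaCirc_zero_right {p q θ : ℝ} (h : q ≤ θ) : betaCirc p q θ = 0 := by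
  unfold betaCirc
  split_ifs with hm
  · have : θ = q := le_antisymm hm.2 h
    simp [this]
  · rfl

lemma betaCirc_mem {p q θ : ℝ} (h1 : p ≤ θ) (h2 : θ ≤ q) :
    betaCirc p q θ =
      2 * Real.sin ((θ - p) / 2) * Real.sin ((q - θ) / 2) / Real.sin ((q - p) / 2) :=
  if_pos ⟨h1, h2⟩

lemma sin_half_pos {x : ℝ} (h0 : 0 < x) (h2 : x < 2 * π) : 0 < Real.sin (x / 2) :=
  Real.sin_pos_of_pos_of_lt_pi (by linarith) (by linarith)

/-- The vector fixed-point identity for coolness functions on the circle. -/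
theorem stmt_2 (θ₁ θ₂ θ₃ θ₄ : ℝ) (h12 : θ₁ < θ₂) (h23 : θ₂ < θ₃) (h34 : θ₃ < θ₄)
    (hlen : θ₄ - θ₁ < 2 * π)
    (η : ℝ)
    (hη : η = (Real.sin ((θ₂ - θ₁) / 2) * Real.sin ((θ₄ - θ₃) / 2)) /
      (Real.sin ((θ₃ - θ₁) / 2) * Real.sin ((θ₄ - θ₂) / 2))) :
    ∀ θ : ℝ,
      betaCirc θ₁ θ₃ θ + betaCirc θ₂ θ₄ θ
        - η * (betaCirc θ₁ θ₂ θ + betaCirc θ₃ θ₄ θ)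
        - (1 - η) * (betaCirc θ₂ θ₃ θ + betaCirc θ₁ θ₄ θ) = 0 := by
  subst hη
  have hπ := Real.pi_pos
  have n12 : Real.sin ((θ₂ - θ₁) / 2) ≠ 0 :=
    (sin_half_pos (by linarith) (by linarith)).ne'
  have n13 : Real.sin ((θ₃ - θ₁) / 2) ≠ 0 :=
    (sin_half_pos (by linarith) (by linarith)).ne'
  have n14 : Real.sin ((θ₄ - θ₁) / 2) ≠ 0 :=
    (sin_half_pos (by linarith) (by linarith)).ne'
  have n23 : Real.sin ((θ₃ - θ₂) / 2) ≠ 0 :=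
    (sin_half_pos (by linarith) (by linarith)).ne'
  have n24 : Real.sin ((θ₄ - θ₂) / 2) ≠ 0 :=
    (sin_half_pos (by linarith) (by linarith)).ne'
  have n34 : Real.sin ((θ₄ - θ₃) / 2) ≠ 0 :=
    (sin_half_pos (by linarith) (by linarith)).ne'
  intro θ
  rcases le_or_gt θ θ₁ with h1 | h1
  · rw [betaCirc_zero_left h1, betaCirc_zero_left (by linarith : θ ≤ θ₂),
      betaCirc_zero_left h1, betaCirc_zero_left (by linarith : θ ≤ θ₃),
      betaCirc_zero_left (by linarith : θ ≤ θ₂), betaCirc_zero_left h1]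
    ring
  rcases le_or_gt θ₄ θ with h4 | h4
  · rw [betaCirc_zero_right (by linarith : θ₃ ≤ θ), betaCirc_zero_right h4,
      betaCirc_zero_right (by linarith : θ₂ ≤ θ), betaCirc_zero_right h4,
      betaCirc_zero_right (by linarith : θ₃ ≤ θ), betaCirc_zero_right h4]
    ring
  rcases le_total θ θ₂ with h2 | h2
  · -- region [θ₁, θ₂]
    rw [betaCirc_mem h1.le (by linarith : θ ≤ θ₃), betaCirc_zero_left h2,
      betaCirc_mem h1.le h2, betaCirc_zero_left (by linarith : θ ≤ θ₃),
      betaCirc_zero_left h2, betaCirc_mem h1.le h4.le]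
    field_simp
    simp only [sub_div, Real.sin_sub]
    ring
  rcases le_total θ θ₃ with h3 | h3
  · -- region [θ₂, θ₃]
    rw [betaCirc_mem h1.le h3, betaCirc_mem h2 h4.le,
      betaCirc_zero_right h2, betaCirc_zero_left h3,
      betaCirc_mem h2 h3, betaCirc_mem h1.le h4.le]
    field_simp
    simp only [sub_div, Real.sin_sub]
    ring
  · -- region [θ₃, θ₄]
    rw [betaCirc_zero_right h3, betaCirc_mem (by linarith : θ₂ ≤ θ) h4.le,
      betaCirc_zero_right (by linarith : θ₂ ≤ θ), betaCirc_mem h3 h4.le,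
      betaCirc_zero_right h3, betaCirc_mem h1.le h4.le]
    field_simp
    simp only [sub_div, Real.sin_sub]
    ring
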